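/- Under the setup described in the context, for all x, y ∈ S' such that x, y, e are pairwise distinct, f_x(y)·g_y(x) = −f_y(x)·g_x(y). -/

import Mathlib

open Projectivization

abbrev Pt (F : Type) [Field F] : Type := Projectivization F (Fin 3 → F)

def IsLine (F : Type) [Field F] (W : Submodule F (Fin 3 → F)) : Prop :=
  Module.finrank F W = 2

noncomputable def secantCount (F : Type) [Field F] (S : Set (Pt F))
    (W : Submodule F (Fin 3 → F)) : ℕ :=
  {p ∈ S | p.submodule ≤ W}.ncard

noncomputable def oddSecants (F : Type) [Field F] (S : Set (Pt F)) : ℕ :=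
  {W : Submodule F (Fin 3 → F) | IsLine F W ∧ Odd (secantCount F S W)}.ncard

noncomputable def linesThroughWithCount (F : Type) [Field F] (S : Set (Pt F))
    (x : Pt F) (i : ℕ) : ℕ :=
  {W : Submodule F (Fin 3 → F) | IsLine F W ∧ x.submodule ≤ W ∧ secantCount F S W = i}.ncard

noncomputable def S43 (F : Type) [Field F] [Fintype F] (S : Set (Pt F)) : Set (Pt F) :=
  {x ∈ S | linesThroughWithCount F S x 1 = 1 ∧ linesThroughWithCount F S x 3 = 1 ∧
    linesThroughWithCount F S x 2 = Fintype.card F - 1}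

open Module Finset

variable {F : Type} [Field F]

lemma pt_finite [Fintype F] : Finite (Pt F) :=
  Finite.of_surjective (fun v : {v : Fin 3 → F // v ≠ 0} => Projectivization.mk F v.1 v.2)
    (fun p => ⟨⟨p.rep, p.rep_nonzero⟩, p.mk_rep⟩)

lemma indep_pair {p q : Pt F} (h : p ≠ q) : LinearIndependent F ![p.rep, q.rep] := by
  rw [linearIndependent_fin2]
  refine ⟨by simpa using q.rep_nonzero, fun s hs => ?_⟩
  apply h
  apply Projectivization.submodule_injective
  have hs0 : s ≠ 0 := by rintro rfl; simp at hs; exact p.rep_nonzero hs.symm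
  rw [Projectivization.submodule_eq, Projectivization.submodule_eq]
  simp only [Matrix.cons_val_zero, Matrix.cons_val_one, Matrix.head_cons] at hs
  rw [← hs, Submodule.span_singleton_smul_eq (IsUnit.mk0 s hs0) _]

lemma span_pair_finrank {p q : Pt F} (h : p ≠ q) :
    Module.finrank F (Submodule.span F {p.rep, q.rep}) = 2 := by
  have hr : Set.range ![p.rep, q.rep] = {p.rep, q.rep} := by
    simp only [Matrix.range_cons, Matrix.range_empty, Set.union_empty, Set.union_singleton]
    exact Set.pair_comm _ _
  have := finrank_span_eq_card (R := F) (indep_pair h)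
  rw [hr] at this
  simpa using this

lemma sup_eq_span_pair (p q : Pt F) :
    p.submodule ⊔ q.submodule = Submodule.span F {p.rep, q.rep} := by
  rw [Projectivization.submodule_eq, Projectivization.submodule_eq,
    show ({p.rep, q.rep} : Set (Fin 3 → F)) = insert p.rep {q.rep} from rfl,
    Submodule.span_insert]

lemma two_point (S : Set (Pt F)) (W : Submodule F (Fin 3 → F))
    (h2 : secantCount F S W = 2) {p q : Pt F} (hp : p ∈ S) (hq : q ∈ S) (hpq : p ≠ q)
    (hpW : p.submodule ≤ W) (hqW : q.submodule ≤ W) :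
    ∀ r ∈ S, r.submodule ≤ W → r = p ∨ r = q := by
  obtain ⟨u, v, huv, hT⟩ := Set.ncard_eq_two.mp h2
  intro r hr hrW
  have hrT : r ∈ {p' ∈ S | p'.submodule ≤ W} := ⟨hr, hrW⟩
  have hpT : p ∈ {p' ∈ S | p'.submodule ≤ W} := ⟨hp, hpW⟩
  have hqT : q ∈ {p' ∈ S | p'.submodule ≤ W} := ⟨hq, hqW⟩
  rw [hT] at hrT hpT hqT
  simp only [Set.mem_insert_iff, Set.mem_singleton_iff] at hrT hpT hqT
  rcases hpT with rfl | rfl <;> rcases hqT with rfl | rfl <;> tauto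

lemma ker_isLine {φ : (Fin 3 → F) →ₗ[F] F} (h : φ ≠ 0) : IsLine F (LinearMap.ker φ) := by
  have hsur : Function.Surjective φ := by
    obtain ⟨v, hv⟩ : ∃ v, φ v ≠ 0 := by
      by_contra hc
      push_neg at hc
      exact h (LinearMap.ext fun v => hc v)
    intro c
    exact ⟨(c / φ v) • v, by simp [div_mul_cancel₀, hv]⟩
  have hrk := LinearMap.finrank_range_add_finrank_ker φ
  rw [LinearMap.range_eq_top.mpr hsur] at hrk
  have h3 : Module.finrank F (Fin 3 → F) = 3 := by simp
  rw [h3] at hrk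
  have : Module.finrank F (⊤ : Submodule F F) = 1 := by simp
  rw [this] at hrk
  unfold IsLine
  omega

lemma line_eq_of_le {W₁ W₂ : Submodule F (Fin 3 → F)} (h1 : IsLine F W₁) (h2 : IsLine F W₂)
    (hle : W₁ ≤ W₂) : W₁ = W₂ :=
  Submodule.eq_of_le_of_finrank_eq hle (by rw [h1, h2])

lemma prod_nonzero_eq_neg_one [Fintype F] [DecidableEq F] :
    (∏ t ∈ Finset.univ.erase (0 : F), t) = -1 := by
  have h1 : ((∏ x : Fˣ, x : Fˣ) : F) = ((-1 : Fˣ) : F) := by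
    rw [FiniteField.prod_univ_units_id_eq_neg_one]
  rw [show ((∏ x : Fˣ, x : Fˣ) : F) = ∏ x : Fˣ, (x : F) from Units.coe_prod id Finset.univ] at h1
  have h2 : (∏ t ∈ Finset.univ.erase (0 : F), t) = ∏ x : Fˣ, (x : F) := by
    refine (Finset.prod_bij (fun (u : Fˣ) _ => (u : F)) ?_ ?_ ?_ ?_).symm
    · intro u _; simp [Finset.mem_erase, u.ne_zero]
    · intro u _ v _ h; exact Units.ext h
    · intro t ht; exact ⟨Units.mk0 t (Finset.mem_erase.mp ht).1, Finset.mem_univ _, rfl⟩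
    · intro u _; rfl
  rw [h2]
  simpa using h1

variable {F : Type} [Field F] (B : Basis (Fin 3) F (Fin 3 → F))

lemma coord_basis (i j : Fin 3) : B.coord i (B j) = if j = i then 1 else 0 := by
  simp [Basis.coord_apply, Basis.repr_self, Finsupp.single_apply]

lemma mem_span_L (t : F) (v : Fin 3 → F) :
    v ∈ Submodule.span F {B 0, B 1 + t • B 2} ↔ B.coord 2 v = t * B.coord 1 v := by
  constructor
  · intro hv
    obtain ⟨s, r, rfl⟩ := Submodule.mem_span_pair.mp hv
    simp [map_add, map_smul, coord_basis]
    ring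
  · intro hv
    have hrep := B.sum_repr v
    rw [Fin.sum_univ_three] at hrep
    have hv' : B.repr v 2 = t * B.repr v 1 := by simpa [Basis.coord_apply] using hv
    refine Submodule.mem_span_pair.mpr ⟨B.repr v 0, B.repr v 1, ?_⟩
    calc B.repr v 0 • B 0 + B.repr v 1 • (B 1 + t • B 2)
        = B.repr v 0 • B 0 + B.repr v 1 • B 1 + (t * B.repr v 1) • B 2 := by module
      _ = B.repr v 0 • B 0 + B.repr v 1 • B 1 + B.repr v 2 • B 2 := by rw [hv']
      _ = v := hrep

lemma mem_span_M (v : Fin 3 → F) :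
    v ∈ Submodule.span F {B 0, B 2} ↔ B.coord 1 v = 0 := by
  constructor
  · intro hv
    obtain ⟨s, r, rfl⟩ := Submodule.mem_span_pair.mp hv
    simp [map_add, map_smul, coord_basis]
  · intro hv
    have hrep := B.sum_repr v
    rw [Fin.sum_univ_three] at hrep
    have hv' : B.repr v 1 = 0 := by simpa [Basis.coord_apply] using hv
    refine Submodule.mem_span_pair.mpr ⟨B.repr v 0, B.repr v 2, ?_⟩
    calc B.repr v 0 • B 0 + B.repr v 2 • B 2
        = B.repr v 0 • B 0 + (0:F) • B 1 + B.repr v 2 • B 2 := by module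
      _ = B.repr v 0 • B 0 + B.repr v 1 • B 1 + B.repr v 2 • B 2 := by rw [hv']
      _ = v := hrep

lemma mem_span_N (v : Fin 3 → F) :
    v ∈ Submodule.span F {B 1, B 2} ↔ B.coord 0 v = 0 := by
  constructor
  · intro hv
    obtain ⟨s, r, rfl⟩ := Submodule.mem_span_pair.mp hv
    simp [map_add, map_smul, coord_basis]
  · intro hv
    have hrep := B.sum_repr v
    rw [Fin.sum_univ_three] at hrep
    have hv' : B.repr v 0 = 0 := by simpa [Basis.coord_apply] using hv
    refine Submodule.mem_span_pair.mpr ⟨B.repr v 1, B.repr v 2, ?_⟩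
    calc B.repr v 1 • B 1 + B.repr v 2 • B 2
        = (0:F) • B 0 + B.repr v 1 • B 1 + B.repr v 2 • B 2 := by module
      _ = B.repr v 0 • B 0 + B.repr v 1 • B 1 + B.repr v 2 • B 2 := by rw [hv']
      _ = v := hrep

lemma span_pair_isLine {u w : Fin 3 → F} (h : LinearIndependent F ![u, w]) :
    IsLine F (Submodule.span F {u, w}) := by
  have hr : Set.range ![u, w] = {u, w} := by
    simp only [Matrix.range_cons, Matrix.range_empty, Set.union_empty, Set.union_singleton]
    exact Set.pair_comm _ _
  have := finrank_span_eq_card (R := F) h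
  rw [hr] at this
  simpa [IsLine] using this

lemma indep_L (t : F) : LinearIndependent F ![B 0, B 1 + t • B 2] := by
  rw [linearIndependent_fin2]
  constructor
  · intro h
    have := congrArg (B.coord 1) (show B 1 + t • B 2 = 0 by simpa using h)
    simp [map_add, map_smul, coord_basis] at this
  · intro s h
    have := congrArg (B.coord 0) (show s • (B 1 + t • B 2) = B 0 by simpa using h)
    simp [map_add, map_smul, coord_basis] at this

lemma indep_M : LinearIndependent F ![B 0, B 2] := by
  rw [linearIndependent_fin2]
  constructor
  · intro h
    have := congrArg (B.coord 2) (show B 2 = 0 by simpa using h)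
    simp [coord_basis] at this
  · intro s h
    have := congrArg (B.coord 0) (show s • B 2 = B 0 by simpa using h)
    simp [map_smul, coord_basis] at this

lemma isLine_L (t : F) : IsLine F (Submodule.span F {B 0, B 1 + t • B 2}) :=
  span_pair_isLine (indep_L B t)

lemma isLine_M : IsLine F (Submodule.span F {B 0, B 2}) :=
  span_pair_isLine (indep_M B)

lemma L_mem_self (t : F) : B 1 + t • B 2 ∈ Submodule.span F {B 0, B 1 + t • B 2} :=
  Submodule.mem_span_pair.mpr ⟨0, 1, by module⟩

lemma L_mem_a (t : F) : B 0 ∈ Submodule.span F {B 0, B 1 + t • B 2} :=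
  Submodule.mem_span_pair.mpr ⟨1, 0, by module⟩

lemma L_inj {t t' : F}
    (h : Submodule.span F {B 0, B 1 + t • B 2} = Submodule.span F {B 0, B 1 + t' • B 2}) :
    t = t' := by
  have hm := L_mem_self B t
  rw [h, mem_span_L] at hm
  have h1 : B.coord 1 (B 1 + t • B 2) = 1 := by simp [map_add, map_smul, coord_basis]
  have h2 : B.coord 2 (B 1 + t • B 2) = t := by simp [map_add, map_smul, coord_basis]
  rw [h1, h2, mul_one] at hm
  exact hm

lemma L_ne_M (t : F) :
    Submodule.span F {B 0, B 1 + t • B 2} ≠ Submodule.span F {B 0, B 2} := by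
  intro h
  have hm := L_mem_self B t
  rw [h, mem_span_M] at hm
  simp [map_add, map_smul, coord_basis] at hm

lemma line_classify (W : Submodule F (Fin 3 → F)) (hW : IsLine F W) (haW : B 0 ∈ W) :
    W = Submodule.span F {B 0, B 2} ∨ ∃ t : F, W = Submodule.span F {B 0, B 1 + t • B 2} := by
  have hnle : ¬ W ≤ Submodule.span F {B 0} := by
    intro hle
    have h1 : Module.finrank F W ≤ Module.finrank F (Submodule.span F ({B 0} : Set (Fin 3 → F))) :=
      Submodule.finrank_mono hle
    have h2 : Module.finrank F (Submodule.span F ({B 0} : Set (Fin 3 → F))) = 1 :=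
      finrank_span_singleton (B.ne_zero 0)
    rw [hW] at h1
    omega
  obtain ⟨w, hwW, hwa⟩ := SetLike.not_le_iff_exists.mp hnle
  have hrep := B.sum_repr w
  rw [Fin.sum_univ_three] at hrep
  by_cases hβ : B.repr w 1 = 0
  · left
    have hγ : B.repr w 2 ≠ 0 := by
      intro hγ
      apply hwa
      rw [hβ, hγ] at hrep
      simp at hrep
      exact Submodule.mem_span_singleton.mpr ⟨B.repr w 0, hrep⟩
    have hc : B 2 ∈ W := by
      have : B 2 = ((B.repr w 2 : F)⁻¹) • (w - (B.repr w 0 : F) • B 0) := by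
        rw [← hrep, hβ]
        match_scalars <;> simp [Finsupp.single_apply, hγ]
      rw [this]
      exact Submodule.smul_mem _ _ (Submodule.sub_mem _ hwW (Submodule.smul_mem _ _ haW))
    refine (line_eq_of_le (isLine_M B) hW ?_).symm
    rw [Submodule.span_le]
    intro z hz
    rcases hz with rfl | hz
    · exact haW
    · rw [Set.mem_singleton_iff] at hz; subst hz; exact hc
  · right
    refine ⟨B.repr w 2 / B.repr w 1, ?_⟩
    have hc : B 1 + (B.repr w 2 / B.repr w 1) • B 2 ∈ W := by
      have : B 1 + (B.repr w 2 / B.repr w 1) • B 2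
          = ((B.repr w 1 : F)⁻¹) • (w - (B.repr w 0 : F) • B 0) := by
        rw [← hrep]
        match_scalars <;> simp [Finsupp.single_apply, hβ, div_eq_inv_mul]
      rw [this]
      exact Submodule.smul_mem _ _ (Submodule.sub_mem _ hwW (Submodule.smul_mem _ _ haW))
    refine (line_eq_of_le (isLine_L B _) hW ?_).symm
    rw [Submodule.span_le]
    intro z hz
    rcases hz with rfl | hz
    · exact haW
    · rw [Set.mem_singleton_iff] at hz; subst hz; exact hc

-- ===== Part 3: configuration lemmas =====
section Config

variable {F : Type} [Field F] [Fintype F]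

instance : Finite (Pt F) := pt_finite

private lemma fg_ne (S S' : Set (Pt F))
    (f g : Pt F → ((Fin 3 → F) →ₗ[F] F))
    (hf : ∀ x ∈ S', f x ≠ 0 ∧ x.submodule ≤ LinearMap.ker (f x) ∧
      secantCount F S (LinearMap.ker (f x)) = 1)
    (hg : ∀ x ∈ S', g x ≠ 0 ∧ x.submodule ≤ LinearMap.ker (g x) ∧
      secantCount F S (LinearMap.ker (g x)) = 3)
    (hbi : ∀ x ∈ S', ∀ y ∈ S', x ≠ y → secantCount F S (x.submodule ⊔ y.submodule) = 2)
    {u v : Pt F} (hu : u ∈ S') (hv : v ∈ S') (huv : u ≠ v) :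
    f u v.rep ≠ 0 ∧ g u v.rep ≠ 0 := by
  have hline : IsLine F (u.submodule ⊔ v.submodule) := by
    rw [sup_eq_span_pair]
    exact span_pair_finrank huv
  have h2 := hbi u hu v hv huv
  constructor
  · intro h0
    have hvk : v.submodule ≤ LinearMap.ker (f u) := by
      rw [Projectivization.submodule_eq]
      exact (Submodule.span_singleton_le_iff_mem _ _).mpr (LinearMap.mem_ker.mpr h0)
    have hle : u.submodule ⊔ v.submodule ≤ LinearMap.ker (f u) := sup_le (hf u hu).2.1 hvk
    have heq := line_eq_of_le hline (ker_isLine (hf u hu).1) hle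
    have hc := (hf u hu).2.2
    rw [← heq, h2] at hc
    omega
  · intro h0
    have hvk : v.submodule ≤ LinearMap.ker (g u) := by
      rw [Projectivization.submodule_eq]
      exact (Submodule.span_singleton_le_iff_mem _ _).mpr (LinearMap.mem_ker.mpr h0)
    have hle : u.submodule ⊔ v.submodule ≤ LinearMap.ker (g u) := sup_le (hg u hu).2.1 hvk
    have heq := line_eq_of_le hline (ker_isLine (hg u hu).1) hle
    have hc := (hg u hu).2.2
    rw [← heq, h2] at hc
    omega

private lemma indep_triple (S : Set (Pt F)) {u v w : Pt F}
    (hu : u ∈ S) (hv : v ∈ S) (hw : w ∈ S) (hvw : v ≠ w)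
    (h2 : secantCount F S (v.submodule ⊔ w.submodule) = 2) (huv : u ≠ v) (huw : u ≠ w) :
    LinearIndependent F ![u.rep, v.rep, w.rep] := by
  have hpair : LinearIndependent F ![v.rep, w.rep] := indep_pair hvw
  have hcons : LinearIndependent F (Fin.cons u.rep ![v.rep, w.rep] : Fin 3 → (Fin 3 → F)) := by
    rw [linearIndependent_fin_cons]
    refine ⟨hpair, fun hmem => ?_⟩
    have hr : Set.range ![v.rep, w.rep] = {v.rep, w.rep} := by
      simp only [Matrix.range_cons, Matrix.range_empty, Set.union_empty, Set.union_singleton]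
      exact Set.pair_comm _ _
    rw [hr] at hmem
    have hle : u.submodule ≤ v.submodule ⊔ w.submodule := by
      rw [Projectivization.submodule_eq, sup_eq_span_pair]
      exact (Submodule.span_singleton_le_iff_mem _ _).mpr hmem
    rcases two_point S _ h2 hv hw hvw le_sup_left le_sup_right u hu hle with rfl | rfl
    · exact huv rfl
    · exact huw rfl
  exact hcons

private lemma coord_nz (S S' : Set (Pt F))
    (hbi : ∀ x ∈ S', ∀ y ∈ S', x ≠ y → secantCount F S (x.submodule ⊔ y.submodule) = 2)
    {x y e : Pt F} (hx : x ∈ S') (hy : y ∈ S') (he : e ∈ S')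
    (hxS : x ∈ S) (hyS : y ∈ S) (heS : e ∈ S)
    (hxy : x ≠ y) (hxe : x ≠ e) (hye : y ≠ e)
    (B : Basis (Fin 3) F (Fin 3 → F))
    (hB0 : B 0 = x.rep) (hB1 : B 1 = y.rep) (hB2 : B 2 = e.rep)
    {p : Pt F} (hpS : p ∈ S) (hpx : p ≠ x) (hpy : p ≠ y) (hpe : p ≠ e) :
    B.coord 0 p.rep ≠ 0 ∧ B.coord 1 p.rep ≠ 0 ∧ B.coord 2 p.rep ≠ 0 := by
  have hnot : ∀ (u v : Pt F), u ∈ S' → v ∈ S' → u ∈ S → v ∈ S → u ≠ v → p ≠ u → p ≠ v →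
      p.rep ∉ Submodule.span F {u.rep, v.rep} := by
    intro u v hu hv huS hvS huv hpu hpv hmem
    have hle : p.submodule ≤ u.submodule ⊔ v.submodule := by
      rw [Projectivization.submodule_eq, sup_eq_span_pair]
      exact (Submodule.span_singleton_le_iff_mem _ _).mpr hmem
    rcases two_point S _ (hbi u hu v hv huv) huS hvS huv le_sup_left le_sup_right p hpS hle
      with rfl | rfl
    · exact hpu rfl
    · exact hpv rfl
  refine ⟨fun h0 => ?_, fun h1 => ?_, fun h2 => ?_⟩
  · have := (mem_span_N B p.rep).mpr h0
    rw [hB1, hB2] at this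
    exact hnot y e hy he hyS heS hye hpy hpe this
  · have := (mem_span_M B p.rep).mpr h1
    rw [hB0, hB2] at this
    exact hnot x e hx he hxS heS hxe hpx hpe this
  · have hz : B.coord 2 p.rep = (0 : F) * B.coord 1 p.rep := by rw [h2, zero_mul]
    have := (mem_span_L B 0 p.rep).mpr hz
    have hsimp : B 1 + (0:F) • B 2 = B 1 := by simp
    rw [hsimp, hB0, hB1] at this
    exact hnot x y hx hy hxS hyS hxy hpx hpy this

end Config

-- ===== Part 4: the key product lemma =====

private lemma segre_key (F : Type) [Field F] [Fintype F]
    (S S' : Set (Pt F)) (hS' : S' ⊆ S43 F S)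
    (f g : Pt F → ((Fin 3 → F) →ₗ[F] F))
    (hf : ∀ x ∈ S', f x ≠ 0 ∧ x.submodule ≤ LinearMap.ker (f x) ∧
      secantCount F S (LinearMap.ker (f x)) = 1)
    (hg : ∀ x ∈ S', g x ≠ 0 ∧ x.submodule ≤ LinearMap.ker (g x) ∧
      secantCount F S (LinearMap.ker (g x)) = 3)
    (hbi : ∀ x ∈ S', ∀ y ∈ S', x ≠ y → secantCount F S (x.submodule ⊔ y.submodule) = 2)
    (x y e : Pt F) (hx : x ∈ S') (hy : y ∈ S') (he : e ∈ S')
    (hxy : x ≠ y) (hxe : x ≠ e) (hye : y ≠ e)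
    (B : Basis (Fin 3) F (Fin 3 → F))
    (hB0 : B 0 = x.rep) (hB1 : B 1 = y.rep) (hB2 : B 2 = e.rep) :
    ∏ p ∈ (S \ {x, y, e} : Set (Pt F)).toFinite.toFinset,
        (B.coord 2 p.rep / B.coord 1 p.rep)
      = -((g x y.rep * f x e.rep) / (g x e.rep * f x y.rep)) := by
  classical
  have hx43 := hS' hx
  simp only [S43, Set.mem_setOf_eq, linesThroughWithCount] at hx43
  obtain ⟨hxS, hc1, hc3, hc2⟩ := hx43
  have hyS : y ∈ S := (hS' hy).1
  have heS : e ∈ S := (hS' he).1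
  have hfx := hf x hx
  have hgx := hg x hx
  obtain ⟨hfxy, hgxy⟩ := fg_ne S S' f g hf hg hbi hx hy hxy
  obtain ⟨hfxe, hgxe⟩ := fg_ne S S' f g hf hg hbi hx he hxe
  have hxsub : x.submodule = Submodule.span F {B 0} := by
    rw [Projectivization.submodule_eq, hB0]
  -- x.rep is in the kernels
  have hfa : f x (B 0) = 0 := by
    rw [hB0]
    have : x.rep ∈ x.submodule := by
      rw [Projectivization.submodule_eq]; exact Submodule.mem_span_singleton_self _
    exact LinearMap.mem_ker.mp (hfx.2.1 this)
  have hga : g x (B 0) = 0 := by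
    rw [hB0]
    have : x.rep ∈ x.submodule := by
      rw [Projectivization.submodule_eq]; exact Submodule.mem_span_singleton_self _
    exact LinearMap.mem_ker.mp (hgx.2.1 this)
  set τf : F := -(f x y.rep / f x e.rep) with hτf
  set τg : F := -(g x y.rep / g x e.rep) with hτg
  have hτf0 : τf ≠ 0 := by
    rw [hτf, neg_ne_zero]
    exact div_ne_zero hfxy hfxe
  have hτg0 : τg ≠ 0 := by
    rw [hτg, neg_ne_zero]
    exact div_ne_zero hgxy hgxe
  -- the tangent and 3-secant lines
  have hkerf : LinearMap.ker (f x) = Submodule.span F {B 0, B 1 + τf • B 2} := by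
    refine (line_eq_of_le (isLine_L B τf) (ker_isLine hfx.1) ?_).symm
    rw [Submodule.span_le]
    intro z hz
    rcases hz with rfl | hz
    · exact LinearMap.mem_ker.mpr hfa
    · rw [Set.mem_singleton_iff] at hz; subst hz
      refine LinearMap.mem_ker.mpr ?_
      rw [map_add, map_smul, hB1, hB2, hτf]
      rw [smul_eq_mul, neg_mul, div_mul_cancel₀ _ hfxe, add_neg_cancel]
  have hkerg : LinearMap.ker (g x) = Submodule.span F {B 0, B 1 + τg • B 2} := by
    refine (line_eq_of_le (isLine_L B τg) (ker_isLine hgx.1) ?_).symm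
    rw [Submodule.span_le]
    intro z hz
    rcases hz with rfl | hz
    · exact LinearMap.mem_ker.mpr hga
    · rw [Set.mem_singleton_iff] at hz; subst hz
      refine LinearMap.mem_ker.mpr ?_
      rw [map_add, map_smul, hB1, hB2, hτg]
      rw [smul_eq_mul, neg_mul, div_mul_cancel₀ _ hgxe, add_neg_cancel]
  have hτfg : τf ≠ τg := by
    intro hEq
    have : LinearMap.ker (f x) = LinearMap.ker (g x) := by rw [hkerf, hkerg, hEq]
    have h1 := hfx.2.2
    rw [this, hgx.2.2] at h1
    omega
  -- counting lines through x
  have hT1 : {W : Submodule F (Fin 3 → F) |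
      IsLine F W ∧ x.submodule ≤ W ∧ secantCount F S W = 1} = {LinearMap.ker (f x)} := by
    obtain ⟨w1, hw1⟩ := Set.ncard_eq_one.mp hc1
    have hmem : LinearMap.ker (f x) ∈ {W : Submodule F (Fin 3 → F) |
        IsLine F W ∧ x.submodule ≤ W ∧ secantCount F S W = 1} :=
      ⟨ker_isLine hfx.1, hfx.2.1, hfx.2.2⟩
    rw [hw1] at hmem ⊢
    rw [Set.mem_singleton_iff] at hmem
    rw [hmem]
  have hT3 : {W : Submodule F (Fin 3 → F) |
      IsLine F W ∧ x.submodule ≤ W ∧ secantCount F S W = 3} = {LinearMap.ker (g x)} := by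
    obtain ⟨w1, hw1⟩ := Set.ncard_eq_one.mp hc3
    have hmem : LinearMap.ker (g x) ∈ {W : Submodule F (Fin 3 → F) |
        IsLine F W ∧ x.submodule ≤ W ∧ secantCount F S W = 3} :=
      ⟨ker_isLine hgx.1, hgx.2.1, hgx.2.2⟩
    rw [hw1] at hmem ⊢
    rw [Set.mem_singleton_iff] at hmem
    rw [hmem]
  -- the q+1 lines through x
  have hAeq : {W : Submodule F (Fin 3 → F) | IsLine F W ∧ x.submodule ≤ W}
      = Set.range (fun o : Option F =>
          Option.elim o (Submodule.span F {B 0, B 2})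
            (fun t => Submodule.span F {B 0, B 1 + t • B 2})) := by
    ext W
    constructor
    · rintro ⟨hW, hxW⟩
      have haW : B 0 ∈ W := by
        rw [hxsub] at hxW
        exact hxW (Submodule.mem_span_singleton_self _)
      rcases line_classify B W hW haW with h | ⟨t, h⟩
      · exact ⟨none, h.symm⟩
      · exact ⟨some t, h.symm⟩
    · rintro ⟨o, rfl⟩
      cases o with
      | none =>
        refine ⟨isLine_M B, ?_⟩
        rw [hxsub]
        exact (Submodule.span_singleton_le_iff_mem _ _).mpr
          (Submodule.subset_span (Or.inl rfl))
      | some t =>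
        refine ⟨isLine_L B t, ?_⟩
        rw [hxsub]
        exact (Submodule.span_singleton_le_iff_mem _ _).mpr (L_mem_a B t)
  have hΛinj : Function.Injective (fun o : Option F =>
      Option.elim o (Submodule.span F {B 0, B 2})
        (fun t => Submodule.span F {B 0, B 1 + t • B 2})) := by
    intro o1 o2 h
    cases o1 with
    | none => cases o2 with
      | none => rfl
      | some t => exact absurd h.symm (L_ne_M B t)
    | some t => cases o2 with
      | none => exact absurd h (L_ne_M B t)
      | some t' => rw [L_inj B h]
  have hAcard : {W : Submodule F (Fin 3 → F) | IsLine F W ∧ x.submodule ≤ W}.ncard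
      = Fintype.card F + 1 := by
    rw [hAeq, ← Set.image_univ, Set.ncard_image_of_injective _ hΛinj, Set.ncard_univ,
      Nat.card_eq_fintype_card, Fintype.card_option]
  -- every line through x is a 1-, 2-, or 3-secant
  have hqpos : 1 ≤ Fintype.card F := Fintype.card_pos
  have hUnion : {W : Submodule F (Fin 3 → F) | IsLine F W ∧ x.submodule ≤ W ∧ secantCount F S W = 1}
      ∪ {W | IsLine F W ∧ x.submodule ≤ W ∧ secantCount F S W = 3}
      ∪ {W | IsLine F W ∧ x.submodule ≤ W ∧ secantCount F S W = 2}
      = {W : Submodule F (Fin 3 → F) | IsLine F W ∧ x.submodule ≤ W} := by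
    apply Set.eq_of_subset_of_ncard_le
    · rintro W ((⟨h1, h2, _⟩ | ⟨h1, h2, _⟩) | ⟨h1, h2, _⟩) <;> exact ⟨h1, h2⟩
    · have hd1 : Disjoint
          {W : Submodule F (Fin 3 → F) | IsLine F W ∧ x.submodule ≤ W ∧ secantCount F S W = 1}
          {W | IsLine F W ∧ x.submodule ≤ W ∧ secantCount F S W = 3} := by
        rw [Set.disjoint_left]
        rintro W ⟨_, _, hca⟩ ⟨_, _, hcb⟩
        omega
      have hd2 : Disjoint
          ({W : Submodule F (Fin 3 → F) | IsLine F W ∧ x.submodule ≤ W ∧ secantCount F S W = 1}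
            ∪ {W | IsLine F W ∧ x.submodule ≤ W ∧ secantCount F S W = 3})
          {W | IsLine F W ∧ x.submodule ≤ W ∧ secantCount F S W = 2} := by
        rw [Set.disjoint_left]
        rintro W (⟨_, _, hca⟩ | ⟨_, _, hca⟩) ⟨_, _, hcb⟩ <;> omega
      rw [hAcard, Set.ncard_union_eq hd2 (Set.toFinite _) (Set.toFinite _),
        Set.ncard_union_eq hd1 (Set.toFinite _) (Set.toFinite _), hc1, hc3, hc2]
      omega
    · exact Set.toFinite _
  -- counts of the lines L t
  have hcount2 : ∀ t : F, t ≠ τf → t ≠ τg →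
      secantCount F S (Submodule.span F {B 0, B 1 + t • B 2}) = 2 := by
    intro t htf htg
    have hLA : Submodule.span F {B 0, B 1 + t • B 2}
        ∈ {W : Submodule F (Fin 3 → F) | IsLine F W ∧ x.submodule ≤ W} := by
      refine ⟨isLine_L B t, ?_⟩
      rw [hxsub]
      exact (Submodule.span_singleton_le_iff_mem _ _).mpr (L_mem_a B t)
    rw [← hUnion] at hLA
    rcases hLA with (h | h) | h
    · exfalso
      rw [hT1, Set.mem_singleton_iff, hkerf] at h
      exact htf (L_inj B h)
    · exfalso
      rw [hT3, Set.mem_singleton_iff, hkerg] at h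
      exact htg (L_inj B h)
    · exact h.2.2
  -- the finset of other points of S
  set P := (S \ {x, y, e} : Set (Pt F)).toFinite.toFinset with hP
  have hmemP : ∀ p : Pt F, p ∈ P ↔ p ∈ S ∧ p ≠ x ∧ p ≠ y ∧ p ≠ e := by
    intro p
    rw [hP, Set.Finite.mem_toFinset, Set.mem_diff]
    simp [Set.mem_insert_iff, not_or]
  -- nonvanishing coordinates
  have hκ1 : ∀ p ∈ P, B.coord 1 p.rep ≠ 0 := by
    intro p hp
    rw [hmemP] at hp
    exact (coord_nz S S' hbi hx hy he hxS hyS heS hxy hxe hye B hB0 hB1 hB2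
      hp.1 hp.2.1 hp.2.2.1 hp.2.2.2).2.1
  have hκ2 : ∀ p ∈ P, B.coord 2 p.rep ≠ 0 := by
    intro p hp
    rw [hmemP] at hp
    exact (coord_nz S S' hbi hx hy he hxS hyS heS hxy hxe hye B hB0 hB1 hB2
      hp.1 hp.2.1 hp.2.2.1 hp.2.2.2).2.2
  -- fiber cardinalities
  have hfib : ∀ t : F, t ≠ 0 →
      (P.filter (fun p => B.coord 2 p.rep = t * B.coord 1 p.rep)).card + 1
        = secantCount F S (Submodule.span F {B 0, B 1 + t • B 2}) := by
    intro t ht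
    have hset : {p ∈ S | p.submodule ≤ Submodule.span F {B 0, B 1 + t • B 2}}
        = insert x (↑(P.filter (fun p => B.coord 2 p.rep = t * B.coord 1 p.rep)) : Set (Pt F)) := by
      ext p
      simp only [Set.mem_setOf_eq, Set.mem_insert_iff, Finset.coe_filter, Finset.mem_coe,
        Finset.mem_filter]
      constructor
      · rintro ⟨hpS, hple⟩
        have hpmem : p.rep ∈ Submodule.span F {B 0, B 1 + t • B 2} := by
          have : p.rep ∈ p.submodule := by
            rw [Projectivization.submodule_eq]; exact Submodule.mem_span_singleton_self _
          exact hple this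
        rw [mem_span_L] at hpmem
        by_cases hpx : p = x
        · exact Or.inl hpx
        · right
          refine ⟨(hmemP p).mpr ⟨hpS, hpx, ?_, ?_⟩, hpmem⟩
          · intro hpy
            apply ht
            have h' : B.coord 2 (B 1) = t * B.coord 1 (B 1) := by
              rw [hB1, ← hpy]; exact hpmem
            simpa [coord_basis] using h'.symm
          · intro hpe
            have h' : B.coord 2 (B 2) = t * B.coord 1 (B 2) := by
              rw [hB2, ← hpe]; exact hpmem
            simp [coord_basis] at h'
      · rintro (rfl | ⟨hpP, hpeq⟩)
        · refine ⟨hxS, ?_⟩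
          rw [hxsub]
          exact (Submodule.span_singleton_le_iff_mem _ _).mpr (L_mem_a B t)
        · refine ⟨((hmemP p).mp hpP).1, ?_⟩
          rw [Projectivization.submodule_eq]
          exact (Submodule.span_singleton_le_iff_mem _ _).mpr ((mem_span_L B t p.rep).mpr hpeq)
    have hxnot : x ∉ (↑(P.filter (fun p => B.coord 2 p.rep = t * B.coord 1 p.rep)) : Set (Pt F)) := by
      intro hmem
      rw [Finset.mem_coe, Finset.mem_filter, hmemP] at hmem
      exact hmem.1.2.1 rfl
    show _ = secantCount F S _
    unfold secantCount
    rw [hset, Set.ncard_insert_of_notMem hxnot (Set.toFinite _), Set.ncard_coe_finset]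
  -- the product over P
  have hmaps : ∀ p ∈ P, B.coord 2 p.rep / B.coord 1 p.rep ∈ Finset.univ.erase (0 : F) := by
    intro p hp
    exact Finset.mem_erase.mpr ⟨div_ne_zero (hκ2 p hp) (hκ1 p hp), Finset.mem_univ _⟩
  have hfiber_prod := Finset.prod_fiberwise_of_maps_to hmaps
    (fun p => B.coord 2 p.rep / B.coord 1 p.rep)
  have hstep : ∀ t ∈ Finset.univ.erase (0 : F),
      (∏ p ∈ P.filter (fun p => B.coord 2 p.rep / B.coord 1 p.rep = t),
        (B.coord 2 p.rep / B.coord 1 p.rep))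
      = t ^ (secantCount F S (Submodule.span F {B 0, B 1 + t • B 2}) - 1) := by
    intro t ht
    have ht0 : t ≠ 0 := (Finset.mem_erase.mp ht).1
    have hfeq : P.filter (fun p => B.coord 2 p.rep / B.coord 1 p.rep = t)
        = P.filter (fun p => B.coord 2 p.rep = t * B.coord 1 p.rep) := by
      apply Finset.filter_congr
      intro p hp
      rw [div_eq_iff (hκ1 p hp)]
    calc (∏ p ∈ P.filter (fun p => B.coord 2 p.rep / B.coord 1 p.rep = t),
          (B.coord 2 p.rep / B.coord 1 p.rep))
        = ∏ _p ∈ P.filter (fun p => B.coord 2 p.rep / B.coord 1 p.rep = t), t :=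
          Finset.prod_congr rfl (fun p hp => (Finset.mem_filter.mp hp).2)
      _ = t ^ (P.filter (fun p => B.coord 2 p.rep / B.coord 1 p.rep = t)).card :=
          Finset.prod_const t
      _ = t ^ (secantCount F S (Submodule.span F {B 0, B 1 + t • B 2}) - 1) := by
          rw [hfeq, ← hfib t ht0, Nat.add_sub_cancel]
  rw [← hfiber_prod, Finset.prod_congr rfl hstep]
  -- evaluate the product over nonzero t
  have hτfT : τf ∈ Finset.univ.erase (0 : F) := Finset.mem_erase.mpr ⟨hτf0, Finset.mem_univ _⟩
  have hτgT : τg ∈ (Finset.univ.erase (0 : F)).erase τf :=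
    Finset.mem_erase.mpr ⟨fun h => hτfg h.symm, Finset.mem_erase.mpr ⟨hτg0, Finset.mem_univ _⟩⟩
  rw [← Finset.mul_prod_erase _ _ hτfT, ← Finset.mul_prod_erase _ _ hτgT]
  have hnf : secantCount F S (Submodule.span F {B 0, B 1 + τf • B 2}) = 1 := by
    rw [← hkerf]; exact hfx.2.2
  have hng : secantCount F S (Submodule.span F {B 0, B 1 + τg • B 2}) = 3 := by
    rw [← hkerg]; exact hgx.2.2
  have hrest : (∏ t ∈ ((Finset.univ.erase (0 : F)).erase τf).erase τg,
      t ^ (secantCount F S (Submodule.span F {B 0, B 1 + t • B 2}) - 1))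
      = ∏ t ∈ ((Finset.univ.erase (0 : F)).erase τf).erase τg, t := by
    apply Finset.prod_congr rfl
    intro t ht
    have h1 := Finset.mem_erase.mp ht
    have h2 := Finset.mem_erase.mp h1.2
    rw [hcount2 t h2.1 h1.1]
    norm_num
  have hprodall : (∏ t ∈ Finset.univ.erase (0 : F), t) = -1 := prod_nonzero_eq_neg_one
  have hprodrest : (∏ t ∈ ((Finset.univ.erase (0 : F)).erase τf).erase τg, t)
      = -1 / (τf * τg) := by
    rw [← Finset.mul_prod_erase _ (fun t => t) hτfT, ← Finset.mul_prod_erase _ (fun t => t) hτgT]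
      at hprodall
    rw [eq_div_iff (mul_ne_zero hτf0 hτg0)]
    linear_combination hprodall
  rw [hrest, hprodrest, hnf, hng]
  rw [hτf, hτg]
  norm_num
  field_simp

-- ===== Part 5: the main theorem =====

private lemma coord_eq_of_basis {F : Type} [Field F] (B B' : Basis (Fin 3) F (Fin 3 → F))
    (i i' : Fin 3)
    (h : ∀ j : Fin 3, ∃ j' : Fin 3, B j = B' j' ∧ (j = i ↔ j' = i')) :
    B'.coord i' = B.coord i := by
  classical
  apply B.ext
  intro j
  obtain ⟨j', hj, hiff⟩ := h j
  have h1 : B'.coord i' (B j) = if j' = i' then (1 : F) else 0 := by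
    rw [hj, coord_basis]
  have h2 : B.coord i (B j) = if j = i then (1 : F) else 0 := coord_basis B i j
  rw [h1, h2]
  by_cases hc : j = i
  · simp [hc, hiff.mp hc]
  · have hng : ¬ j' = i' := fun h' => hc (hiff.mpr h')
    simp [hc, hng]

/-- Segre-type lemma of tangents: `f_x(y) g_y(x) = - f_y(x) g_x(y)` for `x, y ∈ S`. -/
theorem segre_lemma_of_tangents
    (F : Type) [Field F] [Fintype F] (hq : Odd (Fintype.card F))
    (S : Set (Pt F)) (hS : S.ncard = Fintype.card F + 2)
    (S' : Set (Pt F)) (hS' : S' ⊆ S43 F S)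
    (f g : Pt F → ((Fin 3 → F) →ₗ[F] F))
    (hf : ∀ x ∈ S', f x ≠ 0 ∧ x.submodule ≤ LinearMap.ker (f x) ∧
      secantCount F S (LinearMap.ker (f x)) = 1)
    (hg : ∀ x ∈ S', g x ≠ 0 ∧ x.submodule ≤ LinearMap.ker (g x) ∧
      secantCount F S (LinearMap.ker (g x)) = 3)
    (hbi : ∀ x ∈ S', ∀ y ∈ S', x ≠ y → secantCount F S (x.submodule ⊔ y.submodule) = 2)
    (e : Pt F) (he : e ∈ S')
    (hscale : ∀ x ∈ S', f x e.rep = f e x.rep ∧ g x e.rep = g e x.rep)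
    :
    ∀ x ∈ S', ∀ y ∈ S', x ≠ y → x ≠ e → y ≠ e →
      f x y.rep * g y x.rep = -(f y x.rep * g x y.rep) := by
  intro x hx y hy hxy hxe hye
  classical
  have hxS : x ∈ S := (hS' hx).1
  have hyS : y ∈ S := (hS' hy).1
  have heS : e ∈ S := (hS' he).1
  -- three bases
  have hind1 : LinearIndependent F ![x.rep, y.rep, e.rep] :=
    indep_triple S hxS hyS heS hye (hbi y hy e he hye) hxy hxe
  have hind2 : LinearIndependent F ![y.rep, x.rep, e.rep] :=
    indep_triple S hyS hxS heS hxe (hbi x hx e he hxe) (Ne.symm hxy) hye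
  have hind3 : LinearIndependent F ![e.rep, x.rep, y.rep] :=
    indep_triple S heS hxS hyS hxy (hbi x hx y hy hxy) (Ne.symm hxe) (Ne.symm hye)
  have hcard : Fintype.card (Fin 3) = Module.finrank F (Fin 3 → F) := by simp
  set B := basisOfLinearIndependentOfCardEqFinrank hind1 hcard with hBdef
  set B' := basisOfLinearIndependentOfCardEqFinrank hind2 hcard with hB'def
  set B'' := basisOfLinearIndependentOfCardEqFinrank hind3 hcard with hB''def
  have hB : ⇑B = ![x.rep, y.rep, e.rep] := coe_basisOfLinearIndependentOfCardEqFinrank _ _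
  have hB' : ⇑B' = ![y.rep, x.rep, e.rep] := coe_basisOfLinearIndependentOfCardEqFinrank _ _
  have hB'' : ⇑B'' = ![e.rep, x.rep, y.rep] := coe_basisOfLinearIndependentOfCardEqFinrank _ _
  have hB0 : B 0 = x.rep := by rw [hB]; rfl
  have hB1 : B 1 = y.rep := by rw [hB]; rfl
  have hB2 : B 2 = e.rep := by rw [hB]; rfl
  have hB'0 : B' 0 = y.rep := by rw [hB']; rfl
  have hB'1 : B' 1 = x.rep := by rw [hB']; rfl
  have hB'2 : B' 2 = e.rep := by rw [hB']; rfl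
  have hB''0 : B'' 0 = e.rep := by rw [hB'']; rfl
  have hB''1 : B'' 1 = x.rep := by rw [hB'']; rfl
  have hB''2 : B'' 2 = y.rep := by rw [hB'']; rfl
  -- coordinate transfers
  have hc2' : B'.coord 2 = B.coord 2 := by
    apply coord_eq_of_basis
    intro j
    fin_cases j
    · exact ⟨1, by show B 0 = B' 1; rw [hB0, hB'1], by decide⟩
    · exact ⟨0, by show B 1 = B' 0; rw [hB1, hB'0], by decide⟩
    · exact ⟨2, by show B 2 = B' 2; rw [hB2, hB'2], by decide⟩
  have hc1' : B'.coord 1 = B.coord 0 := by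
    apply coord_eq_of_basis
    intro j
    fin_cases j
    · exact ⟨1, by show B 0 = B' 1; rw [hB0, hB'1], by decide⟩
    · exact ⟨0, by show B 1 = B' 0; rw [hB1, hB'0], by decide⟩
    · exact ⟨2, by show B 2 = B' 2; rw [hB2, hB'2], by decide⟩
  have hc2'' : B''.coord 2 = B.coord 1 := by
    apply coord_eq_of_basis
    intro j
    fin_cases j
    · exact ⟨1, by show B 0 = B'' 1; rw [hB0, hB''1], by decide⟩
    · exact ⟨2, by show B 1 = B'' 2; rw [hB1, hB''2], by decide⟩
    · exact ⟨0, by show B 2 = B'' 0; rw [hB2, hB''0], by decide⟩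
  have hc1'' : B''.coord 1 = B.coord 0 := by
    apply coord_eq_of_basis
    intro j
    fin_cases j
    · exact ⟨1, by show B 0 = B'' 1; rw [hB0, hB''1], by decide⟩
    · exact ⟨2, by show B 1 = B'' 2; rw [hB1, hB''2], by decide⟩
    · exact ⟨0, by show B 2 = B'' 0; rw [hB2, hB''0], by decide⟩
  -- the three key identities
  have K1 := segre_key F S S' hS' f g hf hg hbi x y e hx hy he hxy hxe hye B hB0 hB1 hB2
  have K2 := segre_key F S S' hS' f g hf hg hbi y x e hy hx he (Ne.symm hxy) hye hxe
    B' hB'0 hB'1 hB'2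
  have K3 := segre_key F S S' hS' f g hf hg hbi e x y he hx hy (Ne.symm hxe) (Ne.symm hye) hxy
    B'' hB''0 hB''1 hB''2
  -- identify the index sets
  set P := (S \ {x, y, e} : Set (Pt F)).toFinite.toFinset with hPdef
  have hP2 : (S \ {y, x, e} : Set (Pt F)).toFinite.toFinset = P := by
    ext p
    simp only [Set.Finite.mem_toFinset, Set.mem_diff, Set.mem_insert_iff, Set.mem_singleton_iff,
      hPdef]
    tauto
  have hP3 : (S \ {e, x, y} : Set (Pt F)).toFinite.toFinset = P := by
    ext p
    simp only [Set.Finite.mem_toFinset, Set.mem_diff, Set.mem_insert_iff, Set.mem_singleton_iff,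
      hPdef]
    tauto
  rw [hP2, hc2', hc1'] at K2
  rw [hP3, hc2'', hc1''] at K3
  -- coordinates are nonzero on P
  have hκ : ∀ p ∈ P, B.coord 0 p.rep ≠ 0 ∧ B.coord 1 p.rep ≠ 0 ∧ B.coord 2 p.rep ≠ 0 := by
    intro p hp
    rw [hPdef, Set.Finite.mem_toFinset, Set.mem_diff] at hp
    simp only [Set.mem_insert_iff, Set.mem_singleton_iff, not_or] at hp
    exact coord_nz S S' hbi hx hy he hxS hyS heS hxy hxe hye B hB0 hB1 hB2
      hp.1 hp.2.1 hp.2.2.1 hp.2.2.2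
  -- multiplicativity of the slopes
  have hsplit : (∏ p ∈ P, (B.coord 2 p.rep / B.coord 0 p.rep))
      = (∏ p ∈ P, (B.coord 2 p.rep / B.coord 1 p.rep))
        * (∏ p ∈ P, (B.coord 1 p.rep / B.coord 0 p.rep)) := by
    rw [← Finset.prod_mul_distrib]
    apply Finset.prod_congr rfl
    intro p hp
    obtain ⟨h0, h1, _⟩ := hκ p hp
    rw [div_mul_div_comm, mul_comm (B.coord 2 p.rep) (B.coord 1 p.rep),
      mul_div_mul_left _ _ h1]
  -- the combined identity
  have Eq1 : -((g y x.rep * f y e.rep) / (g y e.rep * f y x.rep))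
      = (-((g x y.rep * f x e.rep) / (g x e.rep * f x y.rep)))
        * (-((g e x.rep * f e y.rep) / (g e y.rep * f e x.rep))) := by
    rw [← K2, hsplit, K1, K3]
  -- nonvanishing
  obtain ⟨hfxy, hgxy⟩ := fg_ne S S' f g hf hg hbi hx hy hxy
  obtain ⟨hfyx, hgyx⟩ := fg_ne S S' f g hf hg hbi hy hx (Ne.symm hxy)
  obtain ⟨hfxe, hgxe⟩ := fg_ne S S' f g hf hg hbi hx he hxe
  obtain ⟨hfex, hgex⟩ := fg_ne S S' f g hf hg hbi he hx (Ne.symm hxe)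
  obtain ⟨hfye, hgye⟩ := fg_ne S S' f g hf hg hbi hy he hye
  obtain ⟨hfey, hgey⟩ := fg_ne S S' f g hf hg hbi he hy (Ne.symm hye)
  -- the scaling conditions
  obtain ⟨hsf_x, hsg_x⟩ := hscale x hx
  obtain ⟨hsf_y, hsg_y⟩ := hscale y hy
  rw [hsf_x, hsg_x, hsf_y, hsg_y] at Eq1
  field_simp at Eq1
  -- conclude
  have hcan : (f x y.rep * g y x.rep) * (f e y.rep * (g e y.rep * (f e x.rep * g e x.rep)))
      = (-(f y x.rep * g x y.rep)) * (f e y.rep * (g e y.rep * (f e x.rep * g e x.rep))) := by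
    linear_combination -(f e y.rep * (g e y.rep * (f e x.rep * g e x.rep))) * Eq1
  exact mul_right_cancel₀
    (by exact mul_ne_zero hfey (mul_ne_zero hgey (mul_ne_zero hfex hgex))) hcan
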